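/- Let S* ⊆ (0, ∞) be nonempty, open, and additive, and let S = [0, ∞) \ S*. Then S is bounded. -/
import Mathlib


theorem complement_bounded (Sstar : Set ℝ) (hsub : Sstar ⊆ Set.Ioi 0)
    (hne : Sstar.Nonempty) (hopen : IsOpen Sstar)
    (hadd : ∀ a ∈ Sstar, ∀ b ∈ Sstar, a + b ∈ Sstar) :
    Bornology.IsBounded (Set.Ici (0 : ℝ) \ Sstar) := by
  obtain ⟨s, hs⟩ := hne
  have hs0 : 0 < s := hsub hs
  obtain ⟨ε, hε, hball⟩ := Metric.isOpen_iff.mp hopen s hs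
  have hmul : ∀ n : ℕ, ∀ a ∈ Sstar, ((n + 1 : ℕ) : ℝ) * a ∈ Sstar := by
    intro n
    induction n with
    | zero => intro a ha; simpa using ha
    | succ n ih =>
      intro a ha
      have h := hadd _ (ih a ha) a ha
      have : ((n + 1 + 1 : ℕ) : ℝ) * a = ((n + 1 : ℕ) : ℝ) * a + a := by
        push_cast; ring
      rw [this]; exact h
  set M := s ^ 2 / ε + s with hM
  have hMpos : 0 < M := by positivity
  apply (Metric.isBounded_Icc 0 M).subset
  rintro x ⟨hx0, hxS⟩
  refine ⟨hx0, ?_⟩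
  by_contra hcon
  push_neg at hcon
  apply hxS
  have hx0' : 0 < x := lt_trans hMpos hcon
  set n := ⌈x / s⌉₊ with hn
  have hn1 : 1 ≤ n := Nat.one_le_ceil_iff.mpr (by positivity)
  have hnr : 0 < (n : ℝ) := by exact_mod_cast hn1
  have hle : x / s ≤ (n : ℝ) := Nat.le_ceil _
  have hlt : (n : ℝ) < x / s + 1 := Nat.ceil_lt_add_one (by positivity)
  have h1 : x ≤ (n : ℝ) * s := by
    rw [div_le_iff₀ hs0] at hle; linarith
  have h2 : (n : ℝ) * s < x + s := by
    have h := mul_lt_mul_of_pos_right hlt hs0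
    rw [add_mul, div_mul_cancel₀ _ (ne_of_gt hs0), one_mul] at h
    exact h
  have hcon' : s ^ 2 + s * ε < x * ε := by
    have h := mul_lt_mul_of_pos_right hcon hε
    rw [add_mul, div_mul_cancel₀ _ (ne_of_gt hε)] at h
    linarith
  have ha : x / n ∈ Sstar := by
    apply hball
    rw [Metric.mem_ball, Real.dist_eq, abs_lt]
    constructor
    · rw [neg_lt, neg_sub, sub_lt_iff_lt_add, ← sub_lt_iff_lt_add']
      rw [lt_div_iff₀ hnr]
      rcases le_or_gt s ε with hse | hse
      · have : (s - ε) * (n : ℝ) ≤ 0 :=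
          mul_nonpos_of_nonpos_of_nonneg (by linarith) hnr.le
        linarith
      · nlinarith [mul_lt_mul_of_pos_left h2 (by linarith : (0:ℝ) < s - ε),
          mul_pos hs0 hε]
    · rw [sub_lt_iff_lt_add]
      rw [div_lt_iff₀ hnr]
      nlinarith
  obtain ⟨m, hm⟩ : ∃ m, n = m + 1 := ⟨n - 1, (Nat.succ_pred_eq_of_pos hn1).symm⟩
  have h := hmul m (x / n) ha
  rw [← hm, mul_div_cancel₀ _ (ne_of_gt hnr)] at h
  exact h
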